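/- (Hoffman ratio bound) If G is a k-regular graph on n vertices with smallest adjacency eigenvalue λ < 0 (and k > λ), then the independence number of G satisfies α(G) ≤ -nλ/(k - λ). -/

import Mathlib

open Matrix Finset

private lemma rayleigh_min_aux {V : Type*} [Fintype V] [DecidableEq V]
    (A : Matrix V V ℝ) (hA : A.IsHermitian) (lam : ℝ)
    (hmin : ∀ μ : ℝ, (∃ x : V → ℝ, x ≠ 0 ∧ A.mulVec x = μ • x) → lam ≤ μ)
    (x : V → ℝ) : lam * (x ⬝ᵥ x) ≤ x ⬝ᵥ A *ᵥ x := by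
  have hB : (A - lam • 1).IsHermitian := by
    apply hA.sub
    simp [Matrix.IsHermitian]
  have hpsd : (A - lam • 1).PosSemidef := by
    rw [hB.posSemidef_iff_eigenvalues_nonneg]
    intro i
    have hv := hB.mulVec_eigenvectorBasis i
    rw [sub_mulVec, smul_mulVec, one_mulVec, sub_eq_iff_eq_add] at hv
    have heig : A *ᵥ ⇑(hB.eigenvectorBasis i) =
        (hB.eigenvalues i + lam) • ⇑(hB.eigenvectorBasis i) := by
      rw [hv, add_smul]
    have hne : (⇑(hB.eigenvectorBasis i) : V → ℝ) ≠ 0 :=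
      fun h => hB.eigenvectorBasis.orthonormal.ne_zero i (by
        rw [← WithLp.toLp_ofLp (x := hB.eigenvectorBasis i), h, WithLp.toLp_zero])
    have := hmin _ ⟨_, hne, heig⟩
    rw [Pi.zero_apply]
    linarith
  have h := hpsd.dotProduct_mulVec_nonneg x
  rw [sub_mulVec, dotProduct_sub, smul_mulVec, one_mulVec, dotProduct_smul,
    star_trivial] at h
  simp only [smul_eq_mul] at h
  linarith

theorem hoffman_ratio_bound (V : Type*) [Fintype V] [DecidableEq V]
    (G : SimpleGraph V) [DecidableRel G.Adj] (k : ℕ) (lam : ℝ)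
    (hreg : G.IsRegularOfDegree k)
    (hev : ∃ x : V → ℝ, x ≠ 0 ∧ (G.adjMatrix ℝ).mulVec x = lam • x)
    (hmin : ∀ μ : ℝ, (∃ x : V → ℝ, x ≠ 0 ∧ (G.adjMatrix ℝ).mulVec x = μ • x) → lam ≤ μ)
    (hneg : lam < 0) (hk : lam < (k : ℝ)) :
    ∀ s : Finset V, (∀ v ∈ s, ∀ w ∈ s, v ≠ w → ¬ G.Adj v w) →
      (s.card : ℝ) ≤ -(Fintype.card V : ℝ) * lam / ((k : ℝ) - lam) := by
  intro s hs
  set A : Matrix V V ℝ := G.adjMatrix ℝ with hA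
  have hAH : A.IsHermitian := by
    rw [Matrix.IsHermitian]
    ext i j
    simp [hA, Matrix.conjTranspose_apply, G.adj_comm]
  set n : ℝ := (Fintype.card V : ℝ) with hn
  set c : ℝ := (s.card : ℝ) with hc
  have hklam : (0:ℝ) < (k:ℝ) - lam := by linarith
  rcases eq_or_lt_of_le (by positivity : (0:ℝ) ≤ c) with hc0 | hc0
  · rw [← hc0]
    have hn0 : 0 ≤ n := by positivity
    apply div_nonneg _ (le_of_lt hklam)
    nlinarith
  have hn0 : 0 < n := by
    have : s.card ≤ Fintype.card V := Finset.card_le_univ s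
    have : (0:ℝ) < c := hc0
    have : c ≤ n := by rw [hn, hc]; exact_mod_cast Finset.card_le_univ s
    linarith
  -- vectors
  set ind : V → ℝ := fun v => if v ∈ s then 1 else 0 with hind
  set one : V → ℝ := fun _ => 1 with hone
  set x : V → ℝ := n • ind - c • one with hx
  -- basic dot products
  have d1 : ind ⬝ᵥ ind = c := by
    have h : ∀ v : V, ind v * ind v = ind v := fun v => by
      by_cases h : v ∈ s <;> simp [hind, h]
    simp only [dotProduct, h]
    simp [hind, hc]
  have d2 : ind ⬝ᵥ one = c := by
    simp [dotProduct, hind, hone, hc]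
  have d2' : one ⬝ᵥ ind = c := by
    simp [dotProduct, hind, hone, hc]
  have d3 : one ⬝ᵥ one = n := by
    simp [dotProduct, hone, hn]
  have f1 : A *ᵥ one = (k:ℝ) • one := by
    funext v
    simp only [hA, hone, Pi.smul_apply, smul_eq_mul, mul_one]
    rw [show (fun _ : V => (1:ℝ)) = Function.const V (1:ℝ) from rfl,
      SimpleGraph.adjMatrix_mulVec_const_apply_of_regular hreg]
    simp
  have f2 : one ᵥ* A = (k:ℝ) • one := by
    funext v
    simp only [hA, hone, Pi.smul_apply, smul_eq_mul, mul_one]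
    rw [SimpleGraph.adjMatrix_vecMul_apply]
    simp [hreg v]
  have f3 : ind ⬝ᵥ (A *ᵥ ind) = 0 := by
    rw [dotProduct]
    apply Finset.sum_eq_zero
    intro v _
    by_cases hv : v ∈ s
    · have : (A *ᵥ ind) v = 0 := by
        rw [hA, SimpleGraph.adjMatrix_mulVec_apply]
        apply Finset.sum_eq_zero
        intro u hu
        rw [SimpleGraph.mem_neighborFinset] at hu
        have hune : v ≠ u := G.ne_of_adj hu
        have : u ∉ s := fun hus => hs v hv u hus hune hu
        simp [hind, this]
      rw [this, mul_zero]
    · simp [hind, hv]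
  have f4 : one ⬝ᵥ (A *ᵥ ind) = (k:ℝ) * c := by
    rw [Matrix.dotProduct_mulVec, f2, smul_dotProduct, d2', smul_eq_mul]
  -- quadratic form values
  have hxx : x ⬝ᵥ x = n^2 * c - n * c^2 := by
    rw [hx]
    simp only [sub_dotProduct, dotProduct_sub, smul_dotProduct,
      dotProduct_smul, smul_eq_mul, d1, d2, d2', d3]
    ring
  have hxAx : x ⬝ᵥ (A *ᵥ x) = -(n * (k:ℝ) * c^2) := by
    rw [hx]
    rw [Matrix.mulVec_sub, Matrix.mulVec_smul, Matrix.mulVec_smul, f1]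
    simp only [sub_dotProduct, dotProduct_sub, smul_dotProduct,
      dotProduct_smul, smul_eq_mul, f3, f4, d2, d3]
    ring
  have key := rayleigh_min_aux A hAH lam hmin x
  rw [hxx, hxAx] at key
  -- key : lam * (n^2*c - n*c^2) ≤ -(n*k*c^2)
  rw [le_div_iff₀ hklam]
  nlinarith [mul_pos hn0 hc0, sq_nonneg c, sq_nonneg n]
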